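/- Let α_n = (1/(2π)) · 16^{n+1}(2n+2)/(16^{n+1}+17). Then the entire function F(t) = (1−t)² ∑_{k=0}^∞ α_k t^k (convergent for |t| < 1) has a zero in the open unit disc. -/

import Mathlib

open Real

theorem stmt_5
    (α : ℕ → ℝ)
    (hα : ∀ n, α n = (1 / (2 * π)) * (16 ^ (n+1) * (2*n+2) / (16 ^ (n+1) + 17)))
    (F : ℂ → ℂ)
    (hF : ∀ t, F t = (1 - t) ^ 2 * ∑' k : ℕ, (α k : ℂ) * t ^ k) :
    ∃ t : ℂ, ‖t‖ < 1 ∧ F t = 0 := by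
  have hπ : (0:ℝ) < π := Real.pi_pos
  have hπ1 : (1:ℝ) ≤ π := by linarith [Real.pi_gt_three]
  -- basic facts about α
  have hden : ∀ k : ℕ, (0:ℝ) < 16 ^ (k+1) + 17 := by
    intro k; positivity
  have hα_nonneg : ∀ k, 0 ≤ α k := by
    intro k; rw [hα k]; positivity
  have hα_le : ∀ k : ℕ, α k ≤ (k:ℝ) + 1 := by
    intro k
    rw [hα k]
    have h1 : (16:ℝ) ^ (k+1) * (2*k+2) / (16 ^ (k+1) + 17) ≤ 2*k+2 := by
      rw [div_le_iff₀ (hden k)]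
      have : (0:ℝ) ≤ 2*(k:ℝ)+2 := by positivity
      nlinarith [pow_pos (by norm_num : (0:ℝ) < 16) (k+1)]
    have h2 : 1 / (2*π) ≤ 1/2 := by
      rw [div_le_div_iff₀ (by linarith) (by norm_num)]
      linarith
    calc (1 / (2*π)) * (16 ^ (k+1) * (2*(k:ℝ)+2) / (16 ^ (k+1) + 17))
        ≤ (1/2) * (2*(k:ℝ)+2) := by
          apply mul_le_mul h2 h1 (by positivity) (by norm_num)
      _ = (k:ℝ) + 1 := by ring
  -- the real function
  set g : ℝ → ℝ := fun y => (1-y)^2 * ∑' k : ℕ, α k * y ^ k with hg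
  have hFg : ∀ y : ℝ, F y = ((g y : ℝ) : ℂ) := by
    intro y
    rw [hF, hg]
    push_cast
    rfl
  -- summable bound for continuity
  have hsum_u : Summable (fun k : ℕ => ((k:ℝ)+1) * (4/5) ^ k) := by
    have h1 : HasSum (fun k : ℕ => ((k:ℝ)) * (4/5) ^ k) ((4/5) / (1 - 4/5)^2) :=
      hasSum_coe_mul_geometric_of_norm_lt_one (by rw [Real.norm_eq_abs, abs_of_nonneg (by norm_num)]; norm_num)
    have h2 : HasSum (fun k : ℕ => ((4:ℝ)/5) ^ k) (1 - 4/5)⁻¹ :=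
      hasSum_geometric_of_norm_lt_one (by rw [Real.norm_eq_abs, abs_of_nonneg (by norm_num)]; norm_num)
    have := (h1.add h2).summable
    convert this using 2 with k
    ring
  have hcont : ContinuousOn g (Set.Icc (-(4/5) : ℝ) 0) := by
    apply ContinuousOn.mul
    · exact (Continuous.continuousOn (by continuity))
    · apply continuousOn_tsum (u := fun k : ℕ => ((k:ℝ)+1) * (4/5) ^ k)
      · intro k; exact (Continuous.continuousOn (by continuity))
      · exact hsum_u
      · intro k y hy
        rw [Real.norm_eq_abs, abs_mul, abs_pow]
        have hy1 : |y| ≤ 4/5 := by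
          rw [abs_le]; constructor
          · exact hy.1
          · linarith [hy.2]
        have : |y| ^ k ≤ (4/5:ℝ) ^ k := pow_le_pow_left₀ (abs_nonneg y) hy1 k
        calc |α k| * |y| ^ k = α k * |y| ^ k := by rw [abs_of_nonneg (hα_nonneg k)]
          _ ≤ ((k:ℝ)+1) * (4/5) ^ k := by
              apply mul_le_mul (hα_le k) this (by positivity) (by positivity)
  -- value at 0
  have hg0 : 0 < g 0 := by
    rw [hg]
    simp only
    have : ∑' k : ℕ, α k * (0:ℝ) ^ k = α 0 := by
      rw [tsum_eq_single 0]
      · simp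
      · intro b hb
        simp [zero_pow hb]
    rw [this, hα 0]
    norm_num
    positivity
  -- value at x := -4/5
  set x : ℝ := -(4/5) with hx
  have hxnorm : ‖x‖ < 1 := by rw [hx, Real.norm_eq_abs, abs_neg, abs_of_nonneg (by norm_num : (0:ℝ) ≤ 4/5)]; norm_num
  -- error term e
  set e : ℕ → ℝ := fun k => 17 * ((k:ℝ)+1) / (16 ^ (k+1) + 17) with he
  have he_nonneg : ∀ k, 0 ≤ e k := by intro k; rw [he]; positivity
  have hsplit : ∀ k : ℕ, π * (α k * x ^ k) = ((k:ℝ)+1) * x ^ k - e k * x ^ k := by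
    intro k
    rw [hα k, he]
    field_simp
    ring
  -- bound on e k * (4/5)^k
  have he_bound : ∀ k : ℕ, |e k * x ^ k| ≤ (17/16) * (1/10) ^ k := by
    intro k
    have h1 : |e k * x ^ k| = e k * (4/5) ^ k := by
      rw [abs_mul, abs_of_nonneg (he_nonneg k), abs_pow, hx, abs_neg,
        abs_of_nonneg (by norm_num : (0:ℝ) ≤ 4/5)]
    rw [h1]
    have h2 : e k ≤ 17 * ((k:ℝ)+1) / 16 ^ (k+1) := by
      rw [he]
      apply div_le_div_of_nonneg_left (by positivity) (by positivity)
      linarith [hden k, pow_pos (by norm_num : (0:ℝ) < 16) (k+1)]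
    have hk2 : ((k:ℝ)+1) ≤ 2 ^ k := by
      have := Nat.lt_two_pow_self (n := k)
      exact_mod_cast this
    calc e k * (4/5) ^ k ≤ (17 * ((k:ℝ)+1) / 16 ^ (k+1)) * (4/5) ^ k := by
          apply mul_le_mul_of_nonneg_right h2 (by positivity)
      _ = (17/16) * (((k:ℝ)+1) * ((4/5)^k / 16 ^ k)) := by
          rw [pow_succ]
          ring
      _ = (17/16) * (((k:ℝ)+1) * (1/20) ^ k) := by
          rw [show ((4:ℝ)/5)^k / 16 ^ k = (1/20:ℝ)^k by rw [← div_pow]; norm_num]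
      _ ≤ (17/16) * ((2:ℝ) ^ k * (1/20) ^ k) := by
          apply mul_le_mul_of_nonneg_left _ (by norm_num)
          exact mul_le_mul_of_nonneg_right hk2 (by positivity)
      _ = (17/16) * (1/10) ^ k := by
          rw [← mul_pow]; norm_num
  have hsum_geo : Summable (fun k : ℕ => (17/16:ℝ) * (1/10) ^ k) :=
    (summable_geometric_of_lt_one (by norm_num) (by norm_num)).mul_left _
  have hsum_e : Summable (fun k : ℕ => e k * x ^ k) := by
    apply Summable.of_norm_bounded hsum_geo
    intro k; rw [Real.norm_eq_abs]; exact he_bound k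
  set B : ℝ := ∑' k : ℕ, e k * x ^ k with hB
  -- lower bound on B
  have hBlow : 25/81 < B := by
    have hsplit2 := hsum_e.sum_add_tsum_nat_add 2
    have h2 : HasSum (fun k : ℕ => ((1:ℝ)/10) ^ k) (1 - 1/10)⁻¹ :=
      hasSum_geometric_of_norm_lt_one (by rw [Real.norm_eq_abs, abs_of_nonneg (by norm_num)]; norm_num)
    have h3 : HasSum (fun k : ℕ => (17/16:ℝ) * (1/10) ^ (k+2)) (17/1440) := by
      have h4 := h2.mul_left ((17/16) * (1/100))
      have hv : (17/16:ℝ) * (1/100) * (1 - 1/10)⁻¹ = 17/1440 := by norm_num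
      rw [hv] at h4
      exact h4.congr_fun (fun k => by rw [pow_add]; ring)
    have htail : |∑' k : ℕ, e (k+2) * x ^ (k+2)| ≤ 17/1440 := by
      have h1 : ‖∑' k : ℕ, e (k+2) * x ^ (k+2)‖ ≤ 17/1440 :=
        tsum_of_norm_bounded h3 (fun k => by rw [Real.norm_eq_abs]; exact he_bound (k+2))
      rw [Real.norm_eq_abs] at h1
      exact h1
    have hfirst : ∑ i ∈ Finset.range 2, e i * x ^ i = 17/33 - 136/1365 := by
      simp [Finset.sum_range_succ, he, hx]
      norm_num
    have : B = (17/33 - 136/1365) + ∑' k : ℕ, e (k+2) * x ^ (k+2) := by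
      rw [hB, ← hsplit2, hfirst]
    rw [this]
    have := abs_le.mp htail
    norm_num
    linarith [this.1]
  -- HasSum for π * (α k * x^k)
  have hA1 : HasSum (fun k : ℕ => x ^ k) (1 - x)⁻¹ :=
    hasSum_geometric_of_norm_lt_one hxnorm
  have hA2 : HasSum (fun k : ℕ => (k:ℝ) * x ^ k) (x / (1-x)^2) :=
    hasSum_coe_mul_geometric_of_norm_lt_one hxnorm
  have hA : HasSum (fun k : ℕ => ((k:ℝ)+1) * x ^ k) (25/81) := by
    have := hA2.add hA1
    have hval : x / (1-x)^2 + (1-x)⁻¹ = 25/81 := by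
      rw [hx]; norm_num
    rw [hval] at this
    exact this.congr_fun (fun k => by ring)
  have hS : HasSum (fun k : ℕ => π * (α k * x ^ k)) (25/81 - B) := by
    have := hA.sub hsum_e.hasSum
    rw [← hB] at this
    exact this.congr_fun (fun k => hsplit k)
  have hS' : HasSum (fun k : ℕ => α k * x ^ k) (π⁻¹ * (25/81 - B)) := by
    have := hS.mul_left π⁻¹
    apply this.congr_fun
    intro k
    rw [← mul_assoc, inv_mul_cancel₀ (ne_of_gt hπ), one_mul]
  have hgx : g x < 0 := by
    rw [hg]
    simp only
    rw [hS'.tsum_eq]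
    have h1 : π⁻¹ * (25/81 - B) < 0 := by
      apply mul_neg_of_pos_of_neg (inv_pos.mpr hπ)
      linarith
    have h2 : (0:ℝ) < (1-x)^2 := by rw [hx]; norm_num
    exact mul_neg_of_pos_of_neg h2 h1
  -- IVT
  have hmem : (0:ℝ) ∈ Set.Icc (g x) (g 0) := ⟨le_of_lt hgx, le_of_lt hg0⟩
  have hsub := intermediate_value_Icc (by rw [hx]; norm_num : x ≤ (0:ℝ)) hcont
  obtain ⟨c, hc, hgc⟩ := hsub hmem
  refine ⟨(c:ℂ), ?_, ?_⟩
  · rw [Complex.norm_real, Real.norm_eq_abs, abs_lt]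
    constructor
    · have h6 := hc.1
      rw [hx] at h6
      linarith
    · linarith [hc.2]
  · rw [hFg c, hgc]
    simp
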